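/- Let θ_1,...,θ_N be fixed points with f(θ_n) = (p(θ_n)/q(θ_n)) b(θ_n), and conditionally independent estimates L̂_n that are means of M i.i.d. Bernoulli(b(θ_n)). Suppose p(θ)/q(θ) ≤ C for all θ and |N^{-1}∑_n f(θ_n) - Z| ≤ D N^{τ-1} for some constants C, D > 0 and 0 < τ < 1/2. Then M · E[(Ẑ_N - Z)^2] ≤ D^2 M N^{2τ-2} + C^2/(4N), and in particular M · E[(Ẑ_N - Z)^2] = O(N^{-1}) with constant independent of M for fixed M. -/

import Mathlib

open MeasureTheory ProbabilityTheory

lemma aux_sq_decomp {Ω : Type*} [MeasurableSpace Ω] (μ : Measure Ω) [IsProbabilityMeasure μ]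
    (X : Ω → ℝ) (hX : MemLp X 2 μ) (Z : ℝ) :
    ∫ ω, (X ω - Z) ^ 2 ∂μ = variance X μ + ((∫ ω, X ω ∂μ) - Z) ^ 2 := by
  set Y : Ω → ℝ := fun ω => X ω - Z with hY
  have hYℒ : MemLp Y 2 μ := hX.sub (memLp_const Z)
  have hEY : (∫ ω, Y ω ∂μ) = (∫ ω, X ω ∂μ) - Z := by
    simp [hY, integral_sub (hX.integrable one_le_two) (integrable_const Z)]
  have hvarY : variance Y μ = variance X μ := by
    rw [variance_eq_integral hYℒ.aestronglyMeasurable.aemeasurable, variance_eq_integral hX.aestronglyMeasurable.aemeasurable]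
    congr 1
    funext ω
    rw [hEY]
    simp only [hY, Pi.pow_apply, Pi.sub_apply, hEY]
    ring
  have hvd := variance_eq_sub hYℒ
  rw [hEY, hvarY] at hvd
  have h2 : (∫ ω, (X ω - Z) ^ 2 ∂μ) = ∫ ω, (Y ^ 2) ω ∂μ := rfl
  rw [h2]
  linarith

/-- QMC points `θ_1,...,θ_N` are fixed, `f = (p/q)·b`, the `L̂_n` are
independent with mean `b(θ_n)` and variance `b(θ_n)(1-b(θ_n))/M`; if `p/q ≤ C` and the
bias satisfies `|N⁻¹∑ f(θ_n) - Z| ≤ D N^{τ-1}`, then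
`M · E[(Ẑ_N - Z)²] ≤ D² M N^{2τ-2} + C²/(4N)`. -/
theorem stmt_8 {Ω T : Type*} [MeasurableSpace Ω] (μ : Measure Ω) [IsProbabilityMeasure μ]
    (N M : ℕ) (hN : 1 ≤ N) (hM : 1 ≤ M)
    (θ : Fin N → T) (p q b : T → ℝ)
    (hb : ∀ t, b t ∈ Set.Icc (0 : ℝ) 1)
    (C D : ℝ) (hC : 0 < C) (hD : 0 < D)
    (hw : ∀ t, 0 ≤ p t / q t ∧ p t / q t ≤ C)
    (τ : ℝ) (hτ0 : 0 < τ) (hτ1 : τ < 1 / 2)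
    (f : T → ℝ) (hf : ∀ t, f t = p t / q t * b t)
    (Z : ℝ)
    (hbias : |(∑ n, f (θ n)) / N - Z| ≤ D * (N : ℝ) ^ (τ - 1 : ℝ))
    (L : Fin N → Ω → ℝ)
    (hL2 : ∀ n, MemLp (L n) 2 μ)
    (hindep : iIndepFun L μ)
    (hmean : ∀ n, (∫ ω, L n ω ∂μ) = b (θ n))
    (hvar : ∀ n, variance (L n) μ = b (θ n) * (1 - b (θ n)) / M)
    (Zhat : Ω → ℝ) (hZhat : ∀ ω, Zhat ω = (∑ n, p (θ n) / q (θ n) * L n ω) / N) :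
    (M : ℝ) * ∫ ω, (Zhat ω - Z) ^ 2 ∂μ
      ≤ D ^ 2 * M * (N : ℝ) ^ (2 * τ - 2 : ℝ) + C ^ 2 / (4 * N) := by
  have hN0 : (0 : ℝ) < N := by exact_mod_cast hN
  have hM0 : (0 : ℝ) < M := by exact_mod_cast hM
  set w : Fin N → ℝ := fun n => p (θ n) / q (θ n) with hwdef
  have hZhat' : Zhat = fun ω => (N : ℝ)⁻¹ * ∑ n, w n * L n ω := by
    funext ω; rw [hZhat]; rw [div_eq_inv_mul]
  have hWL : ∀ n : Fin N, MemLp (fun ω => w n * L n ω) 2 μ :=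
    fun n => (hL2 n).const_mul _
  have hS : MemLp (fun ω => ∑ n : Fin N, w n * L n ω) 2 μ := by
    have h := memLp_finset_sum' (μ := μ) Finset.univ (fun n (_ : n ∈ Finset.univ) => hWL n)
    convert h using 1
    funext ω; simp
  have hXℒ : MemLp Zhat 2 μ := by rw [hZhat']; exact hS.const_mul _
  -- mean of Zhat
  have hEZhat : (∫ ω, Zhat ω ∂μ) = (∑ n, f (θ n)) / N := by
    rw [hZhat']
    rw [integral_const_mul, integral_finset_sum _ (fun n _ => ((hL2 n).integrable one_le_two).const_mul _)]
    simp only [integral_const_mul, hmean]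
    rw [div_eq_inv_mul]
    congr 1
    exact Finset.sum_congr rfl fun n _ => by rw [hf]
  -- variance of Zhat
  have hpair : Set.Pairwise ↑(Finset.univ : Finset (Fin N))
      (fun i j => IndepFun (fun ω => w i * L i ω) (fun ω => w j * L j ω) μ) := by
    intro i _ j _ hij
    have h := hindep.indepFun hij
    exact h.comp (measurable_const_mul (w i)) (measurable_const_mul (w j))
  have hvarsum : variance (fun ω => ∑ n, w n * L n ω) μ = ∑ n, (w n) ^ 2 * variance (L n) μ := by
    have h1 : (fun ω => ∑ n, w n * L n ω) = ∑ n, (fun ω => w n * L n ω) := by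
      funext ω; simp
    rw [h1, IndepFun.variance_sum (fun n _ => hWL n) hpair]
    exact Finset.sum_congr rfl fun n _ => variance_const_mul _ _ _
  have hvarZ : variance Zhat μ = ((N : ℝ)⁻¹) ^ 2 * ∑ n, (w n) ^ 2 * variance (L n) μ := by
    rw [hZhat', variance_const_mul, hvarsum]
  -- bound the variance
  have hvarbound : variance Zhat μ ≤ C ^ 2 / (4 * M * N) := by
    rw [hvarZ]
    have hterm : ∀ n : Fin N, (w n) ^ 2 * variance (L n) μ ≤ C ^ 2 / (4 * M) := by
      intro n
      have hb1 := hb (θ n)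
      have hq : b (θ n) * (1 - b (θ n)) ≤ 1 / 4 := by nlinarith [sq_nonneg (2 * b (θ n) - 1)]
      have hw1 := hw (θ n)
      have hw2 : (w n) ^ 2 ≤ C ^ 2 := by
        have := hw1.2
        nlinarith [hw1.1]
      have hvn : variance (L n) μ ≤ (1 / 4) / M := by
        rw [hvar n]
        gcongr
      calc (w n) ^ 2 * variance (L n) μ ≤ C ^ 2 * ((1 / 4) / M) := by
            exact mul_le_mul hw2 hvn (variance_nonneg _ _) (by positivity)
        _ = C ^ 2 / (4 * M) := by ring
    calc ((N : ℝ)⁻¹) ^ 2 * ∑ n, (w n) ^ 2 * variance (L n) μ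
        ≤ ((N : ℝ)⁻¹) ^ 2 * ∑ _n : Fin N, C ^ 2 / (4 * M) := by
          apply mul_le_mul_of_nonneg_left (Finset.sum_le_sum fun n _ => hterm n) (by positivity)
      _ = ((N : ℝ)⁻¹) ^ 2 * (N * (C ^ 2 / (4 * M))) := by simp [mul_comm]
      _ = C ^ 2 / (4 * M * N) := by field_simp
  -- bias bound
  have hbias2 : ((∫ ω, Zhat ω ∂μ) - Z) ^ 2 ≤ D ^ 2 * (N : ℝ) ^ (2 * τ - 2 : ℝ) := by
    rw [hEZhat]
    have h1 : ((∑ n, f (θ n)) / N - Z) ^ 2 ≤ (D * (N : ℝ) ^ (τ - 1 : ℝ)) ^ 2 := by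
      rw [← sq_abs]
      exact pow_le_pow_left₀ (abs_nonneg _) hbias 2
    calc ((∑ n, f (θ n)) / N - Z) ^ 2 ≤ (D * (N : ℝ) ^ (τ - 1 : ℝ)) ^ 2 := h1
      _ = D ^ 2 * ((N : ℝ) ^ (τ - 1 : ℝ)) ^ 2 := by ring
      _ = D ^ 2 * (N : ℝ) ^ (2 * τ - 2 : ℝ) := by
          congr 1
          rw [← Real.rpow_natCast ((N : ℝ) ^ (τ - 1 : ℝ)) 2, ← Real.rpow_mul hN0.le]
          congr 1
          push_cast
          ring
  -- combine
  rw [aux_sq_decomp μ Zhat hXℒ Z]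
  have : (M : ℝ) * (variance Zhat μ + ((∫ ω, Zhat ω ∂μ) - Z) ^ 2)
      = (M : ℝ) * variance Zhat μ + (M : ℝ) * ((∫ ω, Zhat ω ∂μ) - Z) ^ 2 := by ring
  rw [this]
  have h1 : (M : ℝ) * variance Zhat μ ≤ C ^ 2 / (4 * N) := by
    calc (M : ℝ) * variance Zhat μ ≤ (M : ℝ) * (C ^ 2 / (4 * M * N)) :=
          mul_le_mul_of_nonneg_left hvarbound hM0.le
      _ = C ^ 2 / (4 * N) := by field_simp
  have h2 : (M : ℝ) * ((∫ ω, Zhat ω ∂μ) - Z) ^ 2 ≤ D ^ 2 * M * (N : ℝ) ^ (2 * τ - 2 : ℝ) := by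
    calc (M : ℝ) * ((∫ ω, Zhat ω ∂μ) - Z) ^ 2 ≤ (M : ℝ) * (D ^ 2 * (N : ℝ) ^ (2 * τ - 2 : ℝ)) :=
          mul_le_mul_of_nonneg_left hbias2 hM0.le
      _ = D ^ 2 * M * (N : ℝ) ^ (2 * τ - 2 : ℝ) := by ring
  linarith
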